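/- Let ν be a σ-finite measure on α and ρ a σ-finite measure on β. Let f : α → ℝ≥0∞ and g : α × β → ℝ≥0∞ be measurable. Then the measure (ν.withDensity f).bind (fun x => (ρ.withDensity (fun y => g (x, y))).map (Prod.mk x)) on α × β equals (ν.prod ρ).withDensity (fun p => f p.1 * g p). In words: if x is drawn with density f and then y is drawn with density g(x,·), the joint distribution of (x,y) has density f(x)·g(x,y) with respect to the product measure (the chain rule of probability). -/

import Mathlib

open MeasureTheory
open scoped ENNReal

theorem bind_withDensity_let_rnd {α β : Type*} [MeasurableSpace α] [MeasurableSpace β]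
    (ν : Measure α) [SigmaFinite ν] (ρ : Measure β) [SigmaFinite ρ]
    (f : α → ℝ≥0∞) (hf : Measurable f)
    (g : α × β → ℝ≥0∞) (hg : Measurable g) :
    (ν.withDensity f).bind
        (fun x => (ρ.withDensity (fun y => g (x, y))).map (Prod.mk x)) =
      (ν.prod ρ).withDensity (fun p => f p.1 * g p) := by
  have hm : Measurable (fun x => (ρ.withDensity (fun y => g (x, y))).map (Prod.mk x)) := by
    apply Measure.measurable_of_measurable_coe
    intro t ht
    simp_rw [Measure.map_apply measurable_prodMk_left ht,
      withDensity_apply _ (measurable_prodMk_left ht),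
      ← lintegral_indicator (measurable_prodMk_left ht)]
    exact Measurable.lintegral_prod_right' (hg.indicator ht)
  have hfg : Measurable fun a : α × β => f a.1 * g a := (hf.comp measurable_fst).mul hg
  ext s hs
  rw [Measure.bind_apply hs hm.aemeasurable, withDensity_apply _ hs, ← lintegral_indicator hs,
    lintegral_prod _ ((hfg.indicator hs)).aemeasurable,
    lintegral_withDensity_eq_lintegral_mul _ hf]
  · refine lintegral_congr fun x => ?_
    simp only [Pi.mul_apply]
    rw [Measure.map_apply measurable_prodMk_left hs,
      withDensity_apply _ (measurable_prodMk_left hs),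
      ← lintegral_indicator (measurable_prodMk_left hs), ← lintegral_const_mul _ ?mg]
    · refine lintegral_congr fun y => ?_
      simp only [Set.indicator, Set.mem_preimage]
      by_cases hxy : (x, y) ∈ s <;> simp [hxy]
    · exact (hg.comp measurable_prodMk_left).indicator (measurable_prodMk_left hs)
  · exact (Measure.measurable_coe hs).comp hm
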